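/- For natural numbers Ĩ ≥ 2 and D ≥ 2, with d = 2^D, the sequential merging flop count strictly exceeds the hierarchical merging flop count: ∑_{i=2}^{d} Ĩ^i > ∑_{i=1}^{D} 2^{D-i}·Ĩ^{2^i}. (Hence for any tensor ring rank R ≥ 1, 2R³·∑_{i=2}^{d} Ĩ^i > 2R³·∑_{i=1}^{D} 2^{D-i}·Ĩ^{2^i}.) -/

import Mathlib

/-- For `Ĩ ≥ 2` and `D ≥ 2`, with `d = 2^D`, the sequential merging flop count
`2R³ ∑_{i=2}^{d} Ĩ^i` strictly exceeds the hierarchical merging flop count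
`2R³ ∑_{i=1}^{D} 2^(D-i) Ĩ^(2^i)`; equivalently, the sums compare strictly. -/
theorem sequential_gt_hierarchical (It D : ℕ) (hIt : 2 ≤ It) (hD : 2 ≤ D) :
    ∑ i ∈ Finset.Icc 1 D, 2 ^ (D - i) * It ^ 2 ^ i
      < ∑ i ∈ Finset.Icc 2 (2 ^ D), It ^ i := by
  set f : ℕ → ℕ := fun i => 2 ^ i + (D - i) with hf
  -- f is strictly increasing on Icc 1 D
  have hmono : ∀ i ∈ Finset.Icc 1 D, ∀ j ∈ Finset.Icc 1 D, i < j → f i < f j := by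
    intro i hi j hj hij
    simp only [Finset.mem_Icc] at hi hj
    have hDi : D - i = (D - j) + (j - i) := by omega
    have h2 : 2 ^ i + (j - i) < 2 ^ j := by
      have h3 : j - i < 2 ^ (j - i) := Nat.lt_two_pow_self
      have h4 : 2 ^ i + 2 ^ (j - i) ≤ 2 ^ i * 2 ^ (j - i) := by
        apply Nat.add_le_mul
        · exact Nat.one_lt_two_pow (by omega)
        · exact Nat.one_lt_two_pow (by omega)
      calc 2 ^ i + (j - i) < 2 ^ i + 2 ^ (j - i) := by omega
        _ ≤ 2 ^ i * 2 ^ (j - i) := h4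
        _ = 2 ^ j := by rw [← pow_add]; congr 1; omega
    simp only [hf]
    omega
  have hinj : Set.InjOn f (Finset.Icc 1 D) := by
    intro a ha b hb hab
    by_contra hne
    rcases Nat.lt_or_ge a b with h | h
    · exact absurd hab (Nat.ne_of_lt (hmono a ha b hb h))
    · have : b < a := by omega
      exact absurd hab.symm (Nat.ne_of_lt (hmono b hb a ha this))
  -- hierarchical sum ≤ sum over image
  have hstep1 : ∑ i ∈ Finset.Icc 1 D, 2 ^ (D - i) * It ^ 2 ^ i
      ≤ ∑ j ∈ (Finset.Icc 1 D).image f, It ^ j := by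
    rw [Finset.sum_image (fun a ha b hb => hinj ha hb)]
    apply Finset.sum_le_sum
    intro i hi
    simp only [hf]
    rw [pow_add]
    have : 2 ^ (D - i) ≤ It ^ (D - i) := Nat.pow_le_pow_left hIt _
    calc 2 ^ (D - i) * It ^ 2 ^ i ≤ It ^ (D - i) * It ^ 2 ^ i :=
          Nat.mul_le_mul_right _ this
      _ = It ^ 2 ^ i * It ^ (D - i) := by ring
  -- image is inside Icc 3 (2^D), and 2 is not in it
  have hsub : insert 2 ((Finset.Icc 1 D).image f) ⊆ Finset.Icc 2 (2 ^ D) := by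
    intro x hx
    simp only [Finset.mem_insert, Finset.mem_image, Finset.mem_Icc] at hx ⊢
    rcases hx with rfl | ⟨i, ⟨hi1, hi2⟩, rfl⟩
    · constructor
      · exact le_refl 2
      · have : 4 ≤ 2 ^ D := by
          calc 4 = 2 ^ 2 := by norm_num
            _ ≤ 2 ^ D := Nat.pow_le_pow_right (by norm_num) hD
        omega
    · constructor
      · simp only [hf]
        have : 2 ≤ 2 ^ i := by
          calc 2 = 2 ^ 1 := by norm_num
            _ ≤ 2 ^ i := Nat.pow_le_pow_right (by norm_num) hi1
        omega
      · simp only [hf]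
        have h1 : 2 ^ i + (D - i) ≤ 2 ^ i + (D - i) + (f D - f i) := by omega
        have h2 : f i ≤ f D := by
          rcases Nat.eq_or_lt_of_le hi2 with rfl | h
          · exact le_rfl
          · exact le_of_lt (hmono i (by simp [Finset.mem_Icc]; omega) D
              (by simp [Finset.mem_Icc]; omega) h)
        have : f D = 2 ^ D := by simp [hf]
        simp only [hf] at h2
        omega
  have h2notin : 2 ∉ (Finset.Icc 1 D).image f := by
    simp only [Finset.mem_image, Finset.mem_Icc, not_exists]
    rintro i ⟨⟨hi1, hi2⟩, hfi⟩
    simp only [hf] at hfi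
    have : 2 ≤ 2 ^ i := by
      calc 2 = 2 ^ 1 := by norm_num
        _ ≤ 2 ^ i := Nat.pow_le_pow_right (by norm_num) hi1
    have hDi : D ≤ i := by omega
    have h5 : 4 ≤ 2 ^ i := by
      calc 4 = 2 ^ 2 := by norm_num
        _ ≤ 2 ^ i := Nat.pow_le_pow_right (by norm_num) (by omega)
    omega
  have hstep2 : ∑ j ∈ insert 2 ((Finset.Icc 1 D).image f), It ^ j
      ≤ ∑ i ∈ Finset.Icc 2 (2 ^ D), It ^ i :=
    Finset.sum_le_sum_of_subset hsub
  rw [Finset.sum_insert h2notin] at hstep2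
  have hpos : 0 < It ^ 2 := Nat.pow_pos (by omega)
  omega
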